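/- Let K ⊂ ℝ^m with m ≥ 2 be a bounded domain on which the Poincaré–Sobolev inequality ‖f‖_{L²(K)}² ≤ C̃ ‖∇f‖_{L^{2m/(m+2)}(K)}² holds for all f ∈ H¹(K) with ∫_K f h = 0 (h bounded with ∫_K h = 1). Then for any measurable Ω ⊆ K and such f, ∫_Ω |∇f|² + (|K\Ω|/|K|)^{2/m} ∫_K |∇f|² ≥ (1/(2|K|^{2/m} C̃)) ∫_K |f|². -/

import Mathlib

open MeasureTheory Set

lemma aux_add_rpow_le_two_mul (a b : ℝ) (ha : 0 ≤ a) (hb : 0 ≤ b) {s : ℝ}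
    (hs1 : 1 ≤ s) (hs2 : s ≤ 2) :
    (a + b) ^ s ≤ 2 * (a ^ s + b ^ s) := by
  lift a to NNReal using ha
  lift b to NNReal using hb
  have h1 := NNReal.rpow_add_le_mul_rpow_add_rpow a b hs1
  have h2 : (2 : NNReal) ^ (s - 1) ≤ 2 := by
    calc (2 : NNReal) ^ (s - 1) ≤ 2 ^ (1 : ℝ) :=
          NNReal.rpow_le_rpow_of_exponent_le one_le_two (by linarith)
      _ = 2 := NNReal.rpow_one 2
  have h3 : (a + b) ^ s ≤ 2 * (a ^ s + b ^ s) :=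
    h1.trans (mul_le_mul_of_nonneg_right h2 (by positivity))
  exact_mod_cast h3

lemma aux_holder {α : Type*} [MeasurableSpace α] (μ : Measure α) [IsFiniteMeasure μ]
    {E : Type*} [NormedAddCommGroup E] {F : α → E} (hF : MemLp F 2 μ)
    {p : ℝ} (hp : 0 < p) (hp2 : p < 2) :
    ∫ x, ‖F x‖ ^ p ∂μ
      ≤ (∫ x, ‖F x‖ ^ 2 ∂μ) ^ (p / 2) * (μ Set.univ).toReal ^ (1 - p / 2) := by
  have h2p : (0:ℝ) < 2 - p := by linarith
  have hpq : Real.HolderConjugate (2 / p) (2 / (2 - p)) := by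
    rw [Real.holderConjugate_iff]
    constructor
    · rw [lt_div_iff₀ hp]; linarith
    · field_simp; ring
  have hmem1 : MemLp (fun x => ‖F x‖ ^ p) (ENNReal.ofReal (2 / p)) μ := by
    refine ⟨(Real.continuous_rpow_const hp.le).comp_aestronglyMeasurable hF.1.norm, ?_⟩
    rw [eLpNorm_norm_rpow F hp]
    have he : ENNReal.ofReal (2 / p) * ENNReal.ofReal p = 2 := by
      rw [← ENNReal.ofReal_mul (by positivity), div_mul_cancel₀]
      · norm_num
      · exact hp.ne'
    rw [he]
    exact ENNReal.rpow_lt_top_of_nonneg hp.le hF.2.ne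
  have hmem2 : MemLp (fun _ : α => (1:ℝ)) (ENNReal.ofReal (2 / (2 - p))) μ := memLp_const 1
  have H := integral_mul_le_Lp_mul_Lq_of_nonneg hpq
    (f := fun x => ‖F x‖ ^ p) (g := fun _ => (1:ℝ))
    (Filter.Eventually.of_forall fun x => Real.rpow_nonneg (norm_nonneg _) _)
    (Filter.Eventually.of_forall fun _ => zero_le_one) hmem1 hmem2
  simp only [mul_one, Real.one_rpow, integral_const, smul_eq_mul] at H
  have hre : (∫ x, (‖F x‖ ^ p) ^ (2 / p) ∂μ) = ∫ x, ‖F x‖ ^ 2 ∂μ := by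
    refine integral_congr_ae (Filter.Eventually.of_forall fun x => ?_)
    show (‖F x‖ ^ p) ^ (2 / p) = ‖F x‖ ^ 2
    rw [← Real.rpow_mul (norm_nonneg _), show p * (2 / p) = 2 by field_simp, Real.rpow_two]
  rw [hre, one_div_div, one_div_div] at H
  have : (2 - p) / 2 = 1 - p / 2 := by ring
  rwa [this] at H

/-- Core deduction in the proof of the generalized Poincaré inequality: if the
Poincaré–Sobolev inequality `‖f‖_{L²(K)}² ≤ C̃ ‖∇f‖_{L^{2m/(m+2)}(K)}²` holds for all
`f ∈ H¹(K)` with `∫_K f h = 0`, then for any measurable `Ω ⊆ K` and such `f`,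
`∫_Ω |∇f|² + (|K∖Ω|/|K|)^{2/m} ∫_K |∇f|² ≥ (1/(2|K|^{2/m} C̃)) ∫_K |f|²`. -/
theorem generalized_poincare_from_poincare_sobolev
    (m : ℕ) (hm : 2 ≤ m)
    (K : Set (EuclideanSpace ℝ (Fin m)))
    (hKmeas : MeasurableSet K) (hKbdd : Bornology.IsBounded K)
    (h : EuclideanSpace ℝ (Fin m) → ℝ)
    (hhmeas : Measurable h) (hhbdd : ∃ B : ℝ, ∀ x, |h x| ≤ B)
    (hhint : ∫ x in K, h x = 1)
    (Ctilde : ℝ) (hCt : 0 < Ctilde)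
    -- the Poincaré–Sobolev inequality on K, for mean-zero H¹ functions:
    (hPS : ∀ f : EuclideanSpace ℝ (Fin m) → ℝ,
      DifferentiableOn ℝ f K →
      MemLp f 2 (volume.restrict K) →
      MemLp (fun x => fderiv ℝ f x) 2 (volume.restrict K) →
      (∫ x in K, f x * h x) = 0 →
      (∫ x in K, (f x) ^ 2)
        ≤ Ctilde * (∫ x in K, ‖fderiv ℝ f x‖ ^ ((2 * m : ℝ) / (m + 2)))
              ^ ((m + 2 : ℝ) / m)) :
    ∀ (Ω : Set (EuclideanSpace ℝ (Fin m))), Ω ⊆ K → MeasurableSet Ω →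
      ∀ f : EuclideanSpace ℝ (Fin m) → ℝ,
        DifferentiableOn ℝ f K →
        MemLp f 2 (volume.restrict K) →
        MemLp (fun x => fderiv ℝ f x) 2 (volume.restrict K) →
        (∫ x in K, f x * h x) = 0 →
        (∫ x in Ω, ‖fderiv ℝ f x‖ ^ 2)
            + ((volume (K \ Ω)).toReal / (volume K).toReal) ^ ((2 : ℝ) / m)
              * ∫ x in K, ‖fderiv ℝ f x‖ ^ 2
          ≥ (1 / (2 * (volume K).toReal ^ ((2 : ℝ) / m) * Ctilde))
              * ∫ x in K, (f x) ^ 2 := by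
  intro Ω hΩK hΩm f hdf hf2 hDf hmean
  have hKfin : volume K < ⊤ := hKbdd.measure_lt_top
  have hmR : (2:ℝ) ≤ (m:ℝ) := by exact_mod_cast hm
  have hm0 : (0:ℝ) < (m:ℝ) := by linarith
  have hm2 : (0:ℝ) < (m:ℝ) + 2 := by linarith
  set p : ℝ := (2 * m : ℝ) / (m + 2) with hpdef
  set s : ℝ := ((m : ℝ) + 2) / m with hsdef
  have hp : 0 < p := by positivity
  have hp2 : p < 2 := by
    rw [hpdef, div_lt_iff₀ hm2]; linarith
  have hs1 : 1 ≤ s := by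
    rw [hsdef, le_div_iff₀ hm0]; linarith
  have hs2 : s ≤ 2 := by
    rw [hsdef, div_le_iff₀ hm0]; linarith
  have hps : p / 2 * s = 1 := by
    rw [hpdef, hsdef]; field_simp
  have hps' : (1 - p / 2) * s = 2 / m := by
    rw [hpdef, hsdef]; field_simp; ring
  -- nonnegativity of the basic quantities
  have hGnonneg : ∀ x, (0:ℝ) ≤ ‖fderiv ℝ f x‖ ^ 2 := fun x => by positivity
  have hA0 : 0 ≤ ∫ x in Ω, ‖fderiv ℝ f x‖ ^ 2 :=
    setIntegral_nonneg hΩm fun x _ => hGnonneg x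
  have hT0 : 0 ≤ ∫ x in K, ‖fderiv ℝ f x‖ ^ 2 :=
    setIntegral_nonneg hKmeas fun x _ => hGnonneg x
  by_cases hK0 : volume K = 0
  · -- degenerate case: `K` is null
    have hrK : (volume.restrict K : Measure _) = 0 := Measure.restrict_eq_zero.mpr hK0
    have hS0 : (∫ x in K, (f x) ^ 2) = 0 := by rw [hrK]; simp
    rw [ge_iff_le, hS0, mul_zero]
    have hc0 : 0 ≤ ((volume (K \ Ω)).toReal / (volume K).toReal) ^ ((2 : ℝ) / m) :=
      Real.rpow_nonneg (by positivity) _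
    exact add_nonneg hA0 (mul_nonneg hc0 hT0)
  -- main case
  have hKpos : 0 < (volume K).toReal := ENNReal.toReal_pos hK0 hKfin.ne
  haveI hfinK : IsFiniteMeasure (volume.restrict K) :=
    ⟨by rw [Measure.restrict_apply_univ]; exact hKfin⟩
  haveI hfinΩ : IsFiniteMeasure (volume.restrict Ω) :=
    ⟨by rw [Measure.restrict_apply_univ]; exact (measure_mono hΩK).trans_lt hKfin⟩
  haveI hfinC : IsFiniteMeasure (volume.restrict (K \ Ω)) :=
    ⟨by rw [Measure.restrict_apply_univ]; exact (measure_mono diff_subset).trans_lt hKfin⟩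
  have hΩle : volume.restrict Ω ≤ volume.restrict K := Measure.restrict_mono hΩK le_rfl
  have hCle : volume.restrict (K \ Ω) ≤ volume.restrict K :=
    Measure.restrict_mono diff_subset le_rfl
  -- Hölder on the two pieces
  have h1 := aux_holder (volume.restrict Ω) (hDf.mono_measure hΩle) hp hp2
  have h2 := aux_holder (volume.restrict (K \ Ω)) (hDf.mono_measure hCle) hp hp2
  rw [Measure.restrict_apply_univ] at h1 h2
  -- integrability of `‖∇f‖ ^ p` on `K`
  have hple2 : ENNReal.ofReal p ≤ 2 := by
    calc ENNReal.ofReal p ≤ ENNReal.ofReal 2 := ENNReal.ofReal_le_ofReal hp2.le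
      _ = 2 := by norm_num
  have hDfp : MemLp (fun x => fderiv ℝ f x) (ENNReal.ofReal p) (volume.restrict K) :=
    hDf.mono_exponent hple2
  have hip : Integrable (fun x => ‖fderiv ℝ f x‖ ^ p) (volume.restrict K) := by
    have := hDfp.integrable_norm_rpow (by simp [hp]) ENNReal.ofReal_ne_top
    rwa [ENNReal.toReal_ofReal hp.le] at this
  -- split ∫_K ‖∇f‖^p into Ω and K\Ω
  have hsplit : (∫ x in K, ‖fderiv ℝ f x‖ ^ p)
      = (∫ x in Ω, ‖fderiv ℝ f x‖ ^ p) + ∫ x in K \ Ω, ‖fderiv ℝ f x‖ ^ p := by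
    rw [← setIntegral_union disjoint_sdiff_right (hKmeas.diff hΩm)
      (hip.mono_measure hΩle) (hip.mono_measure hCle), union_diff_cancel hΩK]
  -- monotonicity facts
  have haK : (volume Ω).toReal ≤ (volume K).toReal :=
    ENNReal.toReal_mono hKfin.ne (measure_mono hΩK)
  have hBT : (∫ x in K \ Ω, ‖fderiv ℝ f x‖ ^ 2) ≤ ∫ x in K, ‖fderiv ℝ f x‖ ^ 2 := by
    refine setIntegral_mono_set (hDf.norm.integrable_sq)
      (Filter.Eventually.of_forall fun x => hGnonneg x)
      (HasSubset.Subset.eventuallyLE diff_subset)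
  have hB0 : 0 ≤ ∫ x in K \ Ω, ‖fderiv ℝ f x‖ ^ 2 :=
    setIntegral_nonneg (hKmeas.diff hΩm) fun x _ => hGnonneg x
  -- abbreviations
  set A := ∫ x in Ω, ‖fderiv ℝ f x‖ ^ 2 with hAdef
  set T := ∫ x in K, ‖fderiv ℝ f x‖ ^ 2 with hTdef
  set k := (volume K).toReal with hkdef
  set c := (volume (K \ Ω)).toReal with hcdef
  have hc0 : 0 ≤ c := ENNReal.toReal_nonneg
  -- bound the two Hölder pieces
  have h1' : (∫ x in Ω, ‖fderiv ℝ f x‖ ^ p) ≤ A ^ (p / 2) * k ^ (1 - p / 2) := by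
    refine h1.trans (mul_le_mul_of_nonneg_left ?_ (Real.rpow_nonneg hA0 _))
    exact Real.rpow_le_rpow ENNReal.toReal_nonneg haK (by linarith)
  have h2' : (∫ x in K \ Ω, ‖fderiv ℝ f x‖ ^ p) ≤ T ^ (p / 2) * c ^ (1 - p / 2) := by
    refine h2.trans (mul_le_mul_of_nonneg_right ?_ (Real.rpow_nonneg hc0 _))
    exact Real.rpow_le_rpow hB0 hBT (by positivity)
  -- combine
  have hIKle : (∫ x in K, ‖fderiv ℝ f x‖ ^ p)
      ≤ A ^ (p / 2) * k ^ (1 - p / 2) + T ^ (p / 2) * c ^ (1 - p / 2) := by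
    rw [hsplit]; exact add_le_add h1' h2'
  have hIK0 : 0 ≤ ∫ x in K, ‖fderiv ℝ f x‖ ^ p :=
    setIntegral_nonneg hKmeas fun x _ => Real.rpow_nonneg (norm_nonneg _) _
  have hX0 : 0 ≤ A ^ (p / 2) * k ^ (1 - p / 2) := by
    exact mul_nonneg (Real.rpow_nonneg hA0 _) (Real.rpow_nonneg hKpos.le _)
  have hY0 : 0 ≤ T ^ (p / 2) * c ^ (1 - p / 2) := by
    exact mul_nonneg (Real.rpow_nonneg hT0 _) (Real.rpow_nonneg hc0 _)
  have step1 : (∫ x in K, ‖fderiv ℝ f x‖ ^ p) ^ s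
      ≤ (A ^ (p / 2) * k ^ (1 - p / 2) + T ^ (p / 2) * c ^ (1 - p / 2)) ^ s :=
    Real.rpow_le_rpow hIK0 hIKle (by linarith)
  have step2 : (A ^ (p / 2) * k ^ (1 - p / 2) + T ^ (p / 2) * c ^ (1 - p / 2)) ^ s
      ≤ 2 * ((A ^ (p / 2) * k ^ (1 - p / 2)) ^ s + (T ^ (p / 2) * c ^ (1 - p / 2)) ^ s) :=
    aux_add_rpow_le_two_mul _ _ hX0 hY0 hs1 hs2
  have hXs : (A ^ (p / 2) * k ^ (1 - p / 2)) ^ s = A * k ^ ((2:ℝ) / m) := by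
    rw [Real.mul_rpow (Real.rpow_nonneg hA0 _) (Real.rpow_nonneg hKpos.le _),
      ← Real.rpow_mul hA0, ← Real.rpow_mul hKpos.le, hps, hps', Real.rpow_one]
  have hYs : (T ^ (p / 2) * c ^ (1 - p / 2)) ^ s = T * c ^ ((2:ℝ) / m) := by
    rw [Real.mul_rpow (Real.rpow_nonneg hT0 _) (Real.rpow_nonneg hc0 _),
      ← Real.rpow_mul hT0, ← Real.rpow_mul hc0, hps, hps', Real.rpow_one]
  have hPSf := hPS f hdf hf2 hDf hmean
  have hbound : (∫ x in K, (f x) ^ 2)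
      ≤ Ctilde * (2 * (A * k ^ ((2:ℝ) / m) + T * c ^ ((2:ℝ) / m))) := by
    refine hPSf.trans (mul_le_mul_of_nonneg_left ?_ hCt.le)
    calc (∫ x in K, ‖fderiv ℝ f x‖ ^ p) ^ s
        ≤ 2 * ((A ^ (p / 2) * k ^ (1 - p / 2)) ^ s + (T ^ (p / 2) * c ^ (1 - p / 2)) ^ s) :=
          step1.trans step2
      _ = 2 * (A * k ^ ((2:ℝ) / m) + T * c ^ ((2:ℝ) / m)) := by rw [hXs, hYs]
  -- rewrite c ^ (2/m) = k ^ (2/m) * (c/k) ^ (2/m)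
  have hkpow : 0 < k ^ ((2:ℝ) / m) := Real.rpow_pos_of_pos hKpos _
  have hck : c ^ ((2:ℝ) / m) = k ^ ((2:ℝ) / m) * (c / k) ^ ((2:ℝ) / m) := by
    rw [Real.div_rpow hc0 hKpos.le, mul_div_cancel₀ _ hkpow.ne']
  rw [ge_iff_le, one_div, inv_mul_le_iff₀ (by positivity)]
  calc (∫ x in K, (f x) ^ 2)
      ≤ Ctilde * (2 * (A * k ^ ((2:ℝ) / m) + T * c ^ ((2:ℝ) / m))) := hbound
    _ = Ctilde * (2 * (A * k ^ ((2:ℝ) / m)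
          + T * (k ^ ((2:ℝ) / m) * (c / k) ^ ((2:ℝ) / m)))) := by rw [← hck]
    _ = 2 * k ^ ((2:ℝ) / m) * Ctilde * (A + (c / k) ^ ((2:ℝ) / m) * T) := by ring
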